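/- Fix δ > 0 and let H be a complex Hilbert space. The set E_δ = { T : T is a bounded EP operator on H and γ(T) ≥ δ }, where γ(T) = inf{ ‖Tx‖ : x ∈ (ker T)ᗮ, ‖x‖ = 1 } is the reduced minimum modulus of T, is a closed subset of the space of bounded operators on H with the operator-norm topology. -/

import Mathlib

open ContinuousLinearMap Submodule


variable {H : Type*} [NormedAddCommGroup H] [InnerProductSpace ℂ H] [CompleteSpace H]

/-- A bounded operator on a complex Hilbert space is EP if its range is closed and coincides
with the range of its adjoint. -/
def IsEPBounded (A : H →L[ℂ] H) : Prop :=
  IsClosed ((LinearMap.range (A : H →ₗ[ℂ] H) : Submodule ℂ H) : Set H) ∧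
    LinearMap.range (A : H →ₗ[ℂ] H) = LinearMap.range (ContinuousLinearMap.adjoint A : H →ₗ[ℂ] H)

/-- The reduced minimum modulus of a bounded operator:
`γ(T) = inf { ‖Tx‖ : x ∈ (ker T)ᗮ, ‖x‖ = 1 }`. -/
noncomputable def redMinModulus (T : H →L[ℂ] H) : ℝ :=
  sInf ((fun x => ‖T x‖) '' {x : H | x ∈ (LinearMap.ker (T : H →ₗ[ℂ] H) : Submodule ℂ H)ᗮ ∧ ‖x‖ = 1})

lemma ker_eq_orth_range_adjoint (T : H →L[ℂ] H) :
    (LinearMap.ker (T : H →ₗ[ℂ] H) : Submodule ℂ H) = (LinearMap.range ((adjoint T) : H →ₗ[ℂ] H))ᗮ := by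
  ext x
  simp only [LinearMap.mem_ker, Submodule.mem_orthogonal, LinearMap.mem_range,
    ContinuousLinearMap.coe_coe, forall_exists_index]
  constructor
  · rintro hx u y rfl
    rw [adjoint_inner_left, hx, inner_zero_right]
  · intro h
    rw [← inner_self_eq_zero (𝕜 := ℂ) (x := T x), ← adjoint_inner_left]
    exact h _ _ rfl

lemma orth_ker_eq_closure (T : H →L[ℂ] H) :
    ((LinearMap.ker (T : H →ₗ[ℂ] H) : Submodule ℂ H))ᗮ
      = (LinearMap.range ((adjoint T) : H →ₗ[ℂ] H)).topologicalClosure := by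
  rw [ker_eq_orth_range_adjoint, Submodule.orthogonal_orthogonal_eq_closure]

-- closed range from lower bound on (ker T)ᗮ
lemma closed_range_of_bound {T : H →L[ℂ] H} {δ : ℝ} (hδ : 0 < δ)
    (h : ∀ x ∈ ((LinearMap.ker (T : H →ₗ[ℂ] H) : Submodule ℂ H))ᗮ, δ * ‖x‖ ≤ ‖T x‖) :
    IsClosed ((LinearMap.range (T : H →ₗ[ℂ] H) : Submodule ℂ H) : Set H) := by
  set K := ((LinearMap.ker (T : H →ₗ[ℂ] H) : Submodule ℂ H))ᗮ
  have hrange : ((LinearMap.range (T : H →ₗ[ℂ] H) : Submodule ℂ H) : Set H)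
      = Set.range (fun m : K => T m) := by
    ext z
    constructor
    · rintro ⟨x, rfl⟩
      refine ⟨orthogonalProjection K x, ?_⟩
      have hx : (orthogonalProjection (LinearMap.ker (T : H →ₗ[ℂ] H) : Submodule ℂ H) x : H)
          + (orthogonalProjection K x : H) = x := Submodule.starProjection_add_starProjection_orthogonal
        (K := (LinearMap.ker (T : H →ₗ[ℂ] H) : Submodule ℂ H)) x
      have hk : (orthogonalProjection (LinearMap.ker (T : H →ₗ[ℂ] H) : Submodule ℂ H) x : H)
          ∈ LinearMap.ker (T : H →ₗ[ℂ] H) := (orthogonalProjection _ x).2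
      simp only [LinearMap.mem_ker, ContinuousLinearMap.coe_coe] at hk
      calc (T (orthogonalProjection K x) : H)
          = T ((orthogonalProjection (LinearMap.ker (T : H →ₗ[ℂ] H) : Submodule ℂ H) x : H)
              + (orthogonalProjection K x : H)) := by
            rw [map_add, hk, zero_add]
        _ = T x := by rw [hx]
    · rintro ⟨m, rfl⟩
      exact ⟨m, rfl⟩
  rw [hrange]
  have hanti : AntilipschitzWith (⟨δ, hδ.le⟩ : NNReal)⁻¹ (fun m : K => T m) := by
    apply AntilipschitzWith.of_le_mul_dist
    intro x y
    have hb := h (x - y : K) (Submodule.sub_mem _ x.2 y.2)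
    have hcoe : ((x - y : K) : H) = (x : H) - (y : H) := rfl
    rw [hcoe, map_sub] at hb
    have hn : ‖x - y‖ = ‖(x : H) - (y : H)‖ := by
      rw [← hcoe]; rfl
    rw [dist_eq_norm, dist_eq_norm, hn]
    show ‖(x : H) - (y : H)‖ ≤ δ⁻¹ * ‖T x - T y‖
    rw [inv_mul_eq_div, le_div_iff₀ hδ, mul_comm]
    exact hb
  exact hanti.isClosed_range (T.uniformContinuous.comp uniformContinuous_subtype_val)

lemma exists_proj_orth (T : H →L[ℂ] H) (x : H) :
    ∃ k m : H, x = k + m ∧ k ∈ LinearMap.ker (T : H →ₗ[ℂ] H) ∧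
      m ∈ ((LinearMap.ker (T : H →ₗ[ℂ] H) : Submodule ℂ H))ᗮ ∧ T m = T x := by
  set K := (LinearMap.ker (T : H →ₗ[ℂ] H) : Submodule ℂ H)
  refine ⟨orthogonalProjection K x, orthogonalProjection Kᗮ x, ?_, (orthogonalProjection K x).2,
    (orthogonalProjection Kᗮ x).2, ?_⟩
  · exact (show (orthogonalProjection K x : H) + (orthogonalProjection Kᗮ x : H) = x from
      Submodule.starProjection_add_starProjection_orthogonal (K := K) x).symm
  · have hx : (orthogonalProjection K x : H) + (orthogonalProjection Kᗮ x : H) = x :=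
      Submodule.starProjection_add_starProjection_orthogonal (K := K) x
    have hk : T (orthogonalProjection K x : H) = 0 := (orthogonalProjection K x).2
    conv_rhs => rw [← hx]
    rw [map_add, hk, zero_add]

lemma bound_of_redMin {T : H →L[ℂ] H} {δ : ℝ} (h : δ ≤ redMinModulus T) :
    ∀ x ∈ ((LinearMap.ker (T : H →ₗ[ℂ] H) : Submodule ℂ H))ᗮ, δ * ‖x‖ ≤ ‖T x‖ := by
  intro x hx
  rcases eq_or_ne x 0 with rfl | hx0
  · simp
  have hxn : (0 : ℝ) < ‖x‖ := norm_pos_iff.2 hx0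
  set u : H := (‖x‖⁻¹ : ℂ) • x with hu
  have hun : ‖u‖ = 1 := by
    rw [hu, norm_smul]
    simp [norm_inv, abs_of_pos hxn, inv_mul_cancel₀ hxn.ne']
  have humem : u ∈ ((LinearMap.ker (T : H →ₗ[ℂ] H) : Submodule ℂ H))ᗮ :=
    Submodule.smul_mem _ _ hx
  have hmem : ‖T u‖ ∈ (fun x => ‖T x‖) ''
      {x : H | x ∈ (LinearMap.ker (T : H →ₗ[ℂ] H) : Submodule ℂ H)ᗮ ∧ ‖x‖ = 1} :=
    ⟨u, ⟨humem, hun⟩, rfl⟩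
  have hbdd : BddBelow ((fun x => ‖T x‖) ''
      {x : H | x ∈ (LinearMap.ker (T : H →ₗ[ℂ] H) : Submodule ℂ H)ᗮ ∧ ‖x‖ = 1}) := by
    refine ⟨0, ?_⟩
    rintro a ⟨z, _, rfl⟩
    exact norm_nonneg _
  have hle : δ ≤ ‖T u‖ := le_trans h (csInf_le hbdd hmem)
  have hTu : ‖T u‖ = ‖x‖⁻¹ * ‖T x‖ := by
    rw [hu, map_smul, norm_smul]
    simp [abs_of_pos hxn]
  rw [hTu] at hle
  calc δ * ‖x‖ ≤ (‖x‖⁻¹ * ‖T x‖) * ‖x‖ := by nlinarith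
    _ = ‖T x‖ := by field_simp

lemma backward {T : H →L[ℂ] H} {δ : ℝ} (hδ : 0 < δ)
    (h0 : δ ≤ ‖T‖)
    (h1 : ∀ y, δ * ‖adjoint T y‖ ≤ ‖T (adjoint T y)‖)
    (h2 : ∀ y, δ * ‖T y‖ ≤ ‖adjoint T (T y)‖)
    (h3 : ∀ x, δ * ‖adjoint T x‖ ≤ ‖T‖ * ‖T x‖)
    (h4 : ∀ x, δ * ‖T x‖ ≤ ‖T‖ * ‖adjoint T x‖) :
    IsEPBounded T ∧ δ ≤ redMinModulus T := by
  -- bound on (ker T)ᗮ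
  have key : ∀ (S R : H →L[ℂ] H), (∀ y, δ * ‖R y‖ ≤ ‖S (R y)‖) →
      ∀ x ∈ ((LinearMap.range (R : H →ₗ[ℂ] H) : Submodule ℂ H)).topologicalClosure,
        δ * ‖x‖ ≤ ‖S x‖ := by
    intro S R hSR x hx
    have hC : IsClosed {x : H | δ * ‖x‖ ≤ ‖S x‖} :=
      isClosed_le (continuous_const.mul continuous_norm) (S.continuous.norm)
    have hsub : ((LinearMap.range (R : H →ₗ[ℂ] H) : Submodule ℂ H) : Set H) ⊆ {x : H | δ * ‖x‖ ≤ ‖S x‖} := by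
      rintro _ ⟨y, rfl⟩
      exact hSR y
    have hx' : x ∈ closure ((LinearMap.range (R : H →ₗ[ℂ] H) : Submodule ℂ H) : Set H) := hx
    exact (hC.closure_subset_iff.2 hsub) hx'
  have hbnd : ∀ x ∈ ((LinearMap.ker (T : H →ₗ[ℂ] H) : Submodule ℂ H))ᗮ, δ * ‖x‖ ≤ ‖T x‖ := by
    intro x hx
    rw [orth_ker_eq_closure] at hx
    exact key T (adjoint T) h1 x hx
  have hbnd' : ∀ x ∈ ((LinearMap.ker ((adjoint T) : H →ₗ[ℂ] H) : Submodule ℂ H))ᗮ, δ * ‖x‖ ≤ ‖adjoint T x‖ := by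
    intro x hx
    rw [orth_ker_eq_closure, adjoint_adjoint] at hx
    exact key (adjoint T) T h2 x hx
  have hTpos : (0 : ℝ) < ‖T‖ := lt_of_lt_of_le hδ h0
  -- equal kernels
  have kker : (LinearMap.ker (T : H →ₗ[ℂ] H) : Submodule ℂ H) = LinearMap.ker ((adjoint T) : H →ₗ[ℂ] H) := by
    ext x
    simp only [LinearMap.mem_ker, ContinuousLinearMap.coe_coe]
    constructor
    · intro hx
      have := h3 x
      rw [hx, norm_zero, mul_zero] at this
      have : ‖adjoint T x‖ ≤ 0 := by nlinarith
      simpa [norm_le_zero_iff] using this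
    · intro hx
      have := h4 x
      rw [hx, norm_zero, mul_zero] at this
      have : ‖T x‖ ≤ 0 := by nlinarith
      simpa [norm_le_zero_iff] using this
  have hclT : IsClosed ((LinearMap.range (T : H →ₗ[ℂ] H) : Submodule ℂ H) : Set H) :=
    closed_range_of_bound hδ hbnd
  have hclT' : IsClosed ((LinearMap.range ((adjoint T) : H →ₗ[ℂ] H) : Submodule ℂ H) : Set H) :=
    closed_range_of_bound hδ hbnd'
  have horth : ((LinearMap.ker (T : H →ₗ[ℂ] H) : Submodule ℂ H))ᗮ = LinearMap.range ((adjoint T) : H →ₗ[ℂ] H) := by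
    rw [orth_ker_eq_closure, hclT'.submodule_topologicalClosure_eq]
  have horth' : ((LinearMap.ker ((adjoint T) : H →ₗ[ℂ] H) : Submodule ℂ H))ᗮ = LinearMap.range (T : H →ₗ[ℂ] H) := by
    rw [orth_ker_eq_closure, adjoint_adjoint, hclT.submodule_topologicalClosure_eq]
  have hrange : LinearMap.range (T : H →ₗ[ℂ] H) = LinearMap.range ((adjoint T) : H →ₗ[ℂ] H) := by
    rw [← horth, ← horth', kker]
  refine ⟨⟨hclT, hrange⟩, ?_⟩
  -- nonempty unit sphere of (ker T)ᗮ
  have hT0 : T ≠ 0 := by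
    intro h
    rw [h, norm_zero] at hTpos
    exact lt_irrefl _ hTpos
  obtain ⟨v, hv⟩ : ∃ v, T v ≠ 0 := by
    by_contra h
    push_neg at h
    exact hT0 (ContinuousLinearMap.ext fun x => by simpa using h x)
  obtain ⟨k, m, hvkm, hk, hm, hTm⟩ := exists_proj_orth T v
  have hm0 : m ≠ 0 := by
    intro h
    rw [h, map_zero] at hTm
    exact hv hTm.symm
  have hmn : (0 : ℝ) < ‖m‖ := norm_pos_iff.2 hm0
  set u : H := (‖m‖⁻¹ : ℂ) • m with hu
  have hun : ‖u‖ = 1 := by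
    rw [hu, norm_smul]
    simp [abs_of_pos hmn, inv_mul_cancel₀ hmn.ne']
  have humem : u ∈ ((LinearMap.ker (T : H →ₗ[ℂ] H) : Submodule ℂ H))ᗮ := Submodule.smul_mem _ _ hm
  refine le_csInf ⟨‖T u‖, u, ⟨humem, hun⟩, rfl⟩ ?_
  rintro a ⟨x, ⟨hx, hx1⟩, rfl⟩
  have := hbnd x hx
  rw [hx1, mul_one] at this
  exact this

lemma forward {T : H →L[ℂ] H} {δ : ℝ} (hδ : 0 < δ)
    (hEP : IsEPBounded T) (hred : δ ≤ redMinModulus T) :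
    δ ≤ ‖T‖ ∧
    (∀ y, δ * ‖adjoint T y‖ ≤ ‖T (adjoint T y)‖) ∧
    (∀ y, δ * ‖T y‖ ≤ ‖adjoint T (T y)‖) ∧
    (∀ x, δ * ‖adjoint T x‖ ≤ ‖T‖ * ‖T x‖) ∧
    (∀ x, δ * ‖T x‖ ≤ ‖T‖ * ‖adjoint T x‖) := by
  obtain ⟨hclT, hrange⟩ := hEP
  have hbnd := bound_of_redMin hred
  have hclT' : IsClosed ((LinearMap.range ((adjoint T) : H →ₗ[ℂ] H) : Submodule ℂ H) : Set H) := by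
    rw [← hrange]; exact hclT
  have horth : ((LinearMap.ker (T : H →ₗ[ℂ] H) : Submodule ℂ H))ᗮ = LinearMap.range ((adjoint T) : H →ₗ[ℂ] H) := by
    rw [orth_ker_eq_closure, hclT'.submodule_topologicalClosure_eq]
  have kker : (LinearMap.ker (T : H →ₗ[ℂ] H) : Submodule ℂ H) = LinearMap.ker ((adjoint T) : H →ₗ[ℂ] H) := by
    rw [ker_eq_orth_range_adjoint T, ker_eq_orth_range_adjoint (adjoint T),
      adjoint_adjoint, hrange]
  -- nonempty: δ ≤ ‖T‖
  have h0 : δ ≤ ‖T‖ := by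
    by_cases hne : ((fun x => ‖T x‖) ''
        {x : H | x ∈ (LinearMap.ker (T : H →ₗ[ℂ] H) : Submodule ℂ H)ᗮ ∧ ‖x‖ = 1}).Nonempty
    · obtain ⟨a, x, ⟨hx, hx1⟩, rfl⟩ := hne
      have h1 := hbnd x hx
      rw [hx1, mul_one] at h1
      calc δ ≤ ‖T x‖ := h1
        _ ≤ ‖T‖ * ‖x‖ := T.le_opNorm x
        _ = ‖T‖ := by rw [hx1, mul_one]
    · rw [Set.not_nonempty_iff_eq_empty] at hne
      rw [redMinModulus, hne, Real.sInf_empty] at hred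
      linarith
  -- bound for adjoint on (ker T)ᗮ
  have hadj : ∀ z ∈ ((LinearMap.ker (T : H →ₗ[ℂ] H) : Submodule ℂ H))ᗮ, δ * ‖z‖ ≤ ‖adjoint T z‖ := by
    intro z hz
    rcases eq_or_ne z 0 with rfl | hz0
    · simp
    have hzr : z ∈ LinearMap.range (T : H →ₗ[ℂ] H) := by
      rw [hrange, ← horth]; exact hz
    obtain ⟨y, hy⟩ := hzr
    obtain ⟨k, m, hykm, hk, hm, hTm⟩ := exists_proj_orth T y
    have hTmz : T m = z := by rw [hTm]; exact hy
    have hm0 : m ≠ 0 := by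
      intro h
      rw [h, map_zero] at hTmz
      exact hz0 hTmz.symm
    have hmn : (0 : ℝ) < ‖m‖ := norm_pos_iff.2 hm0
    have hδm : δ * ‖m‖ ≤ ‖z‖ := by
      have := hbnd m hm
      rwa [hTmz] at this
    have hinner : (inner ℂ (adjoint T z) m : ℂ) = inner ℂ z z := by
      rw [adjoint_inner_left, hTmz]
    have hnormin : ‖(inner ℂ z z : ℂ)‖ = ‖z‖ * ‖z‖ := by
      rw [inner_self_eq_norm_sq_to_K (𝕜 := ℂ)]
      simp [norm_pow, sq]
    have hle : ‖z‖ * ‖z‖ ≤ ‖adjoint T z‖ * ‖m‖ := by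
      calc ‖z‖ * ‖z‖ = ‖(inner ℂ z z : ℂ)‖ := hnormin.symm
        _ = ‖(inner ℂ (adjoint T z) m : ℂ)‖ := by rw [hinner]
        _ ≤ ‖adjoint T z‖ * ‖m‖ := norm_inner_le_norm _ _
    have hz0' : (0:ℝ) < ‖z‖ := norm_pos_iff.2 hz0
    nlinarith
  refine ⟨h0, ?_, ?_, ?_, ?_⟩
  · intro y
    apply hbnd
    rw [horth]
    exact ⟨y, rfl⟩
  · intro y
    apply hadj
    rw [horth, ← hrange]
    exact ⟨y, rfl⟩
  · intro x
    obtain ⟨k, m, hxkm, hk, hm, hTm⟩ := exists_proj_orth T x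
    have hk' : adjoint T k = 0 := by
      rw [kker] at hk
      exact hk
    have hTx : adjoint T x = adjoint T m := by
      rw [hxkm, map_add, hk', zero_add]
    have h1 : ‖adjoint T m‖ ≤ ‖T‖ * ‖m‖ := by
      have := (adjoint T).le_opNorm m
      rwa [LinearIsometryEquiv.norm_map ContinuousLinearMap.adjoint T] at this
    have h2 : δ * ‖m‖ ≤ ‖T m‖ := hbnd m hm
    rw [hTx, ← hTm]
    nlinarith [norm_nonneg (T m), norm_nonneg (adjoint T m), norm_nonneg m]
  · intro x
    obtain ⟨k, m, hxkm, hk, hm, hTm⟩ := exists_proj_orth T x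
    have hk' : adjoint T k = 0 := by
      rw [kker] at hk
      exact hk
    have hTx : adjoint T x = adjoint T m := by
      rw [hxkm, map_add, hk', zero_add]
    have h1 : ‖T m‖ ≤ ‖T‖ * ‖m‖ := T.le_opNorm m
    have h2 : δ * ‖m‖ ≤ ‖adjoint T m‖ := hadj m hm
    rw [hTx, ← hTm]
    nlinarith [norm_nonneg (T m), norm_nonneg (adjoint T m), norm_nonneg m, opNorm_nonneg T]

/-- For a fixed `δ > 0`, the set `E_δ` of all bounded EP operators `T` on a complex Hilbert
space with `γ(T) ≥ δ` is a closed subset of `B(H)` (with the operator-norm topology). -/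
theorem stmt15 (δ : ℝ) (hδ : 0 < δ) :
    IsClosed {T : H →L[ℂ] H | IsEPBounded T ∧ δ ≤ redMinModulus T} := by
  have hset : {T : H →L[ℂ] H | IsEPBounded T ∧ δ ≤ redMinModulus T} =
      ({T : H →L[ℂ] H | δ ≤ ‖T‖} ∩
      (⋂ y : H, {T : H →L[ℂ] H | δ * ‖adjoint T y‖ ≤ ‖T (adjoint T y)‖}) ∩
      (⋂ y : H, {T : H →L[ℂ] H | δ * ‖T y‖ ≤ ‖adjoint T (T y)‖}) ∩
      (⋂ x : H, {T : H →L[ℂ] H | δ * ‖adjoint T x‖ ≤ ‖T‖ * ‖T x‖}) ∩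
      (⋂ x : H, {T : H →L[ℂ] H | δ * ‖T x‖ ≤ ‖T‖ * ‖adjoint T x‖})) := by
    ext T
    simp only [Set.mem_setOf_eq, Set.mem_inter_iff, Set.mem_iInter]
    constructor
    · rintro ⟨hEP, hred⟩
      obtain ⟨h0, h1, h2, h3, h4⟩ := forward hδ hEP hred
      exact ⟨⟨⟨⟨h0, h1⟩, h2⟩, h3⟩, h4⟩
    · rintro ⟨⟨⟨⟨h0, h1⟩, h2⟩, h3⟩, h4⟩
      exact backward hδ h0 h1 h2 h3 h4
  rw [hset]
  have ca : Continuous fun T : H →L[ℂ] H => adjoint T :=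
    (ContinuousLinearMap.adjoint (𝕜 := ℂ) (E := H) (F := H)).continuous
  refine IsClosed.inter (IsClosed.inter (IsClosed.inter (IsClosed.inter ?_ ?_) ?_) ?_) ?_
  · exact isClosed_le continuous_const continuous_norm
  · refine isClosed_iInter fun y => ?_
    have c1 : Continuous fun T : H →L[ℂ] H => adjoint T y := ca.clm_apply continuous_const
    exact isClosed_le (continuous_const.mul c1.norm) ((continuous_id.clm_apply c1).norm)
  · refine isClosed_iInter fun y => ?_
    have c1 : Continuous fun T : H →L[ℂ] H => T y := continuous_id.clm_apply continuous_const
    exact isClosed_le (continuous_const.mul c1.norm) ((ca.clm_apply c1).norm)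
  · refine isClosed_iInter fun x => ?_
    have c1 : Continuous fun T : H →L[ℂ] H => adjoint T x := ca.clm_apply continuous_const
    have c2 : Continuous fun T : H →L[ℂ] H => T x := continuous_id.clm_apply continuous_const
    exact isClosed_le (continuous_const.mul c1.norm) (continuous_norm.mul c2.norm)
  · refine isClosed_iInter fun x => ?_
    have c1 : Continuous fun T : H →L[ℂ] H => adjoint T x := ca.clm_apply continuous_const
    have c2 : Continuous fun T : H →L[ℂ] H => T x := continuous_id.clm_apply continuous_const
    exact isClosed_le (continuous_const.mul c2.norm) (continuous_norm.mul c1.norm)
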